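/- If X₁,…,Xₙ are i.i.d. with distribution P̄ and Q̄ is another probability measure with both P̄, Q̄ dominated by λ, then for all x ∈ ℝ, P[∑_{i=1}^n log((dQ̄/dP̄)(X_i)) ≥ 2x] ≤ exp[n·log ρ(P̄,Q̄) − x] ≤ exp[n·h²(P̄,Q̄) − x], where ρ(P̄,Q̄) = ∫√(dP̄ dQ̄) is the Hellinger affinity and h² = 1 − ρ. -/
import Mathlib


open MeasureTheory Real
open scoped ENNReal

lemma my_lintegral_pi_pow {𝒳 : Type*} [MeasurableSpace 𝒳] (μ : Measure 𝒳) [SigmaFinite μ]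
    {g : 𝒳 → ℝ≥0∞} (hg : Measurable g) (n : ℕ) :
    ∫⁻ y, ∏ i : Fin n, g (y i) ∂(Measure.pi (fun _ : Fin n => μ)) = (∫⁻ z, g z ∂μ) ^ n := by
  induction n with
  | zero => simp [Measure.pi_empty_univ]
  | succ n ih =>
      have hF : Measurable (fun y : Fin (n+1) → 𝒳 => ∏ i, g (y i)) :=
        Finset.measurable_prod _ fun i _ => hg.comp (measurable_pi_apply i)
      rw [← ((measurePreserving_piFinSuccAbove (fun _ : Fin (n+1) => μ) 0).symm).lintegral_comp hF]
      simp_rw [MeasurableEquiv.piFinSuccAbove_symm_apply, Fin.insertNthEquiv,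
        Fin.prod_univ_succ, Fin.insertNth_zero]
      simp only [Fin.zero_succAbove, Function.comp_def, Fin.cons_zero, Fin.cons_succ, cast_eq,
        Equiv.coe_fn_mk]
      have hprod : AEMeasurable (fun b : Fin n → 𝒳 => ∏ x : Fin n, g (b x))
          (Measure.pi fun _ => μ) :=
        (Finset.measurable_prod Finset.univ
          (fun i _ => hg.comp (measurable_pi_apply i)) :
          Measurable (fun b : Fin n → 𝒳 => ∏ x : Fin n, g (b x))).aemeasurable
      rw [lintegral_prod_mul hg.aemeasurable hprod, ih, pow_succ']

lemma my_mul_div_rpow_half (a b : ℝ≥0∞) (ha : a ≠ ∞) :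
    a * (b / a) ^ ((1:ℝ)/2) = (a * b) ^ ((1:ℝ)/2) := by
  rcases eq_or_ne a 0 with rfl | ha0
  · simp [ENNReal.zero_rpow_of_pos, (by norm_num : (0:ℝ) < 1/2)]
  · have h2 : a ^ ((1:ℝ)/2) ≠ 0 := by
      simp [ENNReal.rpow_eq_zero_iff, ha0, ha]
    have h3 : a ^ ((1:ℝ)/2) ≠ ∞ := ENNReal.rpow_ne_top_of_nonneg (by norm_num) ha
    rw [ENNReal.div_rpow_of_nonneg _ _ (by norm_num), ENNReal.mul_rpow_of_nonneg _ _ (by norm_num)]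
    have ha' : a = a ^ ((1:ℝ)/2) * a ^ ((1:ℝ)/2) := by
      rw [← ENNReal.rpow_add _ _ ha0 ha]; norm_num
    rw [div_eq_mul_inv]
    nth_rewrite 1 [ha']
    calc a ^ ((1:ℝ)/2) * a ^ ((1:ℝ)/2) * (b ^ ((1:ℝ)/2) * (a ^ ((1:ℝ)/2))⁻¹)
        = a ^ ((1:ℝ)/2) * b ^ ((1:ℝ)/2) * (a ^ ((1:ℝ)/2) * (a ^ ((1:ℝ)/2))⁻¹) := by ring
      _ = a ^ ((1:ℝ)/2) * b ^ ((1:ℝ)/2) := by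
          rw [ENNReal.mul_inv_cancel h2 h3, mul_one]

lemma my_rpow_half_le_add (a b : ℝ≥0∞) : (a * b) ^ ((1:ℝ)/2) ≤ a + b := by
  have h1 : a * b ≤ (a + b) ^ (2:ℝ) := by
    rw [show (2:ℝ) = ((2:ℕ):ℝ) by norm_num, ENNReal.rpow_natCast, sq]
    exact mul_le_mul' le_self_add le_add_self
  calc (a * b) ^ ((1:ℝ)/2) ≤ ((a + b) ^ (2:ℝ)) ^ ((1:ℝ)/2) :=
        ENNReal.rpow_le_rpow h1 (by norm_num)
    _ = a + b := by rw [← ENNReal.rpow_mul]; norm_num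
/-- If `X₁,…,Xₙ` are i.i.d. with distribution `P` and `Q` is another probability
measure, both dominated by a σ-finite `lam`, then for all `x ∈ ℝ`,
`P[∑ log((dQ/dP)(Xᵢ)) ≥ 2x] ≤ exp(n log ρ(P,Q) − x) ≤ exp(n h²(P,Q) − x)`, where
`ρ(P,Q) = ∫ √(dP dQ)` is the Hellinger affinity and `h² = 1 − ρ`. The event is expressed
multiplicatively in `ℝ≥0∞`, which encodes the convention that the log-likelihood ratio is
`+∞` where `dP/dlam = 0 < dQ/dlam`. -/
theorem stmt_3 {𝒳 : Type*} [MeasurableSpace 𝒳] (P Q lam : Measure 𝒳)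
    [IsProbabilityMeasure P] [IsProbabilityMeasure Q] [SigmaFinite lam]
    (hP : P ≪ lam) (hQ : Q ≪ lam) (n : ℕ) (x : ℝ) :
    (Measure.pi (fun _ : Fin n => P))
        {y | ENNReal.ofReal (Real.exp (2 * x))
          ≤ ∏ i : Fin n, (Q.rnDeriv lam (y i) / P.rnDeriv lam (y i))}
      ≤ ENNReal.ofReal (Real.exp ((n : ℝ) *
          Real.log (∫ z, Real.sqrt ((P.rnDeriv lam z).toReal * (Q.rnDeriv lam z).toReal) ∂lam)
          - x)) ∧
    ENNReal.ofReal (Real.exp ((n : ℝ) *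
        Real.log (∫ z, Real.sqrt ((P.rnDeriv lam z).toReal * (Q.rnDeriv lam z).toReal) ∂lam)
        - x))
      ≤ ENNReal.ofReal (Real.exp ((n : ℝ) *
          (1 - ∫ z, Real.sqrt ((P.rnDeriv lam z).toReal * (Q.rnDeriv lam z).toReal) ∂lam)
          - x)) := by
  set p : 𝒳 → ℝ≥0∞ := P.rnDeriv lam with hp
  set q : 𝒳 → ℝ≥0∞ := Q.rnDeriv lam with hq
  have hpm : Measurable p := Measure.measurable_rnDeriv P lam
  have hqm : Measurable q := Measure.measurable_rnDeriv Q lam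
  have hpfin : ∀ᵐ z ∂lam, p z < ∞ := Measure.rnDeriv_lt_top P lam
  have hqfin : ∀ᵐ z ∂lam, q z < ∞ := Measure.rnDeriv_lt_top Q lam
  set ρ' : ℝ≥0∞ := ∫⁻ z, (p z * q z) ^ ((1:ℝ)/2) ∂lam with hρ'
  set ρ : ℝ := ∫ z, Real.sqrt ((p z).toReal * (q z).toReal) ∂lam with hρ
  have hmulm : Measurable fun z => (p z * q z) ^ ((1:ℝ)/2) :=
    (hpm.mul hqm).pow_const _
  -- ρ' is finite
  have hintp : ∫⁻ z, p z ∂lam = 1 := by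
    rw [Measure.lintegral_rnDeriv hP]; simp
  have hintq : ∫⁻ z, q z ∂lam = 1 := by
    rw [Measure.lintegral_rnDeriv hQ]; simp
  have hρ'fin : ρ' ≠ ∞ := by
    refine ne_top_of_le_ne_top (by norm_num : (2:ℝ≥0∞) ≠ ∞) ?_
    calc ρ' ≤ ∫⁻ z, (p z + q z) ∂lam :=
          lintegral_mono fun z => my_rpow_half_le_add _ _
      _ = 2 := by rw [lintegral_add_left hpm, hintp, hintq]; norm_num
  -- ρ = ρ'.toReal
  have hρtoReal : ρ = ρ'.toReal := by
    rw [hρ, ← integral_toReal hmulm.aemeasurable ?_]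
    · refine integral_congr_ae ?_
      filter_upwards [hpfin, hqfin] with z h1 h2
      rw [← ENNReal.toReal_rpow, ENNReal.toReal_mul, ← Real.sqrt_eq_rpow]
    · filter_upwards [hpfin, hqfin] with z h1 h2
      exact ENNReal.rpow_lt_top_of_nonneg (by norm_num) (ENNReal.mul_lt_top h1 h2).ne
  have hρnonneg : (0:ℝ) ≤ ρ := by rw [hρtoReal]; exact ENNReal.toReal_nonneg
  -- ρ ≤ 1
  have hρle1 : ρ ≤ 1 := by
    have hInt : Integrable (fun z => ((p z).toReal + (q z).toReal) / 2) lam :=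
      ((Measure.integrable_toReal_rnDeriv.add Measure.integrable_toReal_rnDeriv).div_const 2)
    have hle : ρ ≤ ∫ z, ((p z).toReal + (q z).toReal) / 2 ∂lam := by
      refine integral_mono_of_nonneg (Filter.Eventually.of_forall fun z => Real.sqrt_nonneg _)
        hInt (Filter.Eventually.of_forall fun z => ?_)
      have ha : (0:ℝ) ≤ (p z).toReal := ENNReal.toReal_nonneg
      have hb : (0:ℝ) ≤ (q z).toReal := ENNReal.toReal_nonneg
      have h1 : (p z).toReal * (q z).toReal ≤ (((p z).toReal + (q z).toReal) / 2) ^ 2 := by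
        nlinarith [sq_nonneg ((p z).toReal - (q z).toReal)]
      calc Real.sqrt ((p z).toReal * (q z).toReal)
          ≤ Real.sqrt ((((p z).toReal + (q z).toReal) / 2) ^ 2) := Real.sqrt_le_sqrt h1
        _ = ((p z).toReal + (q z).toReal) / 2 := Real.sqrt_sq (by positivity)
    have h2 : ∫ z, ((p z).toReal + (q z).toReal) / 2 ∂lam = 1 := by
      rw [integral_div, integral_add Measure.integrable_toReal_rnDeriv
        Measure.integrable_toReal_rnDeriv, Measure.integral_toReal_rnDeriv hP,
        Measure.integral_toReal_rnDeriv hQ]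
      simp
    linarith
  constructor
  · -- Markov part
    set r : 𝒳 → ℝ≥0∞ := fun z => (q z / p z) ^ ((1:ℝ)/2) with hr
    have hrm : Measurable r := (hqm.div hpm).pow_const _
    have hgm : Measurable fun y : Fin n → 𝒳 => ∏ i, r (y i) :=
      Finset.measurable_prod _ fun i _ => hrm.comp (measurable_pi_apply i)
    have hsub : {y : Fin n → 𝒳 | ENNReal.ofReal (Real.exp (2 * x))
          ≤ ∏ i : Fin n, (q (y i) / p (y i))}
        ⊆ {y : Fin n → 𝒳 | ENNReal.ofReal (Real.exp x) ≤ ∏ i, r (y i)} := by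
      intro y hy
      have h1 : (ENNReal.ofReal (Real.exp (2 * x))) ^ ((1:ℝ)/2)
          ≤ (∏ i : Fin n, (q (y i) / p (y i))) ^ ((1:ℝ)/2) :=
        ENNReal.rpow_le_rpow hy (by norm_num)
      have h2 : (ENNReal.ofReal (Real.exp (2 * x))) ^ ((1:ℝ)/2)
          = ENNReal.ofReal (Real.exp x) := by
        rw [ENNReal.ofReal_rpow_of_pos (Real.exp_pos _), ← Real.exp_mul]
        ring_nf
      rwa [h2, ← ENNReal.prod_rpow_of_nonneg (by norm_num : (0:ℝ) ≤ 1/2)] at h1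
    have hmarkov : (Measure.pi (fun _ : Fin n => P))
          {y : Fin n → 𝒳 | ENNReal.ofReal (Real.exp x) ≤ ∏ i, r (y i)}
        ≤ (∫⁻ y, ∏ i, r (y i) ∂(Measure.pi (fun _ : Fin n => P)))
            / ENNReal.ofReal (Real.exp x) :=
      meas_ge_le_lintegral_div hgm.aemeasurable
        (by simp [Real.exp_pos, (Real.exp_pos x).le, ENNReal.ofReal_eq_zero, not_le,
          (Real.exp_pos x)]) ENNReal.ofReal_ne_top
    have hfactor : ∫⁻ z, r z ∂P = ρ' := by
      rw [← lintegral_rnDeriv_mul hP hrm.aemeasurable]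
      refine lintegral_congr_ae ?_
      filter_upwards [hpfin] with z hz
      exact my_mul_div_rpow_half _ _ hz.ne
    have hlint : ∫⁻ y, ∏ i, r (y i) ∂(Measure.pi (fun _ : Fin n => P)) = ρ' ^ n := by
      rw [my_lintegral_pi_pow P hrm n, hfactor]
    have hρ'eq : ρ' = ENNReal.ofReal ρ := by
      rw [hρtoReal, ENNReal.ofReal_toReal hρ'fin]
    have hpow : ρ ^ n ≤ Real.exp ((n:ℝ) * Real.log ρ) := by
      rcases eq_or_lt_of_le hρnonneg with h0 | h0
      · rcases Nat.eq_zero_or_pos n with rfl | hn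
        · simp
        · rw [← h0, zero_pow hn.ne']
          exact (Real.exp_pos _).le
      · rw [mul_comm, Real.exp_mul, Real.exp_log h0, Real.rpow_natCast]
    calc (Measure.pi (fun _ : Fin n => P))
          {y : Fin n → 𝒳 | ENNReal.ofReal (Real.exp (2 * x))
            ≤ ∏ i : Fin n, (q (y i) / p (y i))}
        ≤ (Measure.pi (fun _ : Fin n => P))
            {y : Fin n → 𝒳 | ENNReal.ofReal (Real.exp x) ≤ ∏ i, r (y i)} :=
          measure_mono hsub
      _ ≤ ρ' ^ n / ENNReal.ofReal (Real.exp x) := by rw [← hlint]; exact hmarkov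
      _ = ENNReal.ofReal (ρ ^ n * Real.exp (-x)) := by
          rw [hρ'eq, div_eq_mul_inv, ← ENNReal.ofReal_inv_of_pos (Real.exp_pos x),
            ← Real.exp_neg, ← ENNReal.ofReal_pow hρnonneg, ← ENNReal.ofReal_mul (by positivity)]
      _ ≤ ENNReal.ofReal (Real.exp ((n:ℝ) * Real.log ρ - x)) := by
          refine ENNReal.ofReal_le_ofReal ?_
          rw [Real.exp_sub, Real.exp_neg, div_eq_mul_inv]
          exact mul_le_mul_of_nonneg_right hpow (by positivity)
  · refine ENNReal.ofReal_le_ofReal (Real.exp_le_exp.mpr (sub_le_sub_right ?_ x))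
    refine mul_le_mul_of_nonneg_left ?_ (Nat.cast_nonneg n)
    rcases eq_or_lt_of_le hρnonneg with h0 | h0
    · rw [← h0, Real.log_zero]; linarith
    · have := Real.log_le_sub_one_of_pos h0
      linarith
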